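/- The limit set Q_∞ of the subdivision scheme satisfies Q_∞ ⊆ F_Λ(Q_∞). -/
import Mathlib


open Set

def Fpt {n p : ℕ} (f : (Fin n → ℝ) → (Fin p → ℝ) → (Fin n → ℝ))
    (Λ : Set (Fin p → ℝ)) (x : Fin n → ℝ) : Set (Fin n → ℝ) :=
  (f x) '' Λ

def FSet {n p : ℕ} (f : (Fin n → ℝ) → (Fin p → ℝ) → (Fin n → ℝ))
    (Λ : Set (Fin p → ℝ)) (B : Set (Fin n → ℝ)) : Set (Fin n → ℝ) :=
  ⋃ x ∈ B, Fpt f Λ x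

/-- the limit set `Q_∞ = ⋂_ℓ Q_ℓ` of the subdivision scheme satisfies
`Q_∞ ⊆ F_Λ(Q_∞)`. -/
theorem stmt4 {n p : ℕ} (f : (Fin n → ℝ) → (Fin p → ℝ) → (Fin n → ℝ))
    (Λ : Set (Fin p → ℝ)) (Q : Set (Fin n → ℝ))
    (hΛ : IsCompact Λ) (hQ : IsCompact Q)
    (hf : Continuous fun z : (Fin n → ℝ) × (Fin p → ℝ) => f z.1 z.2)
    (C : ℕ → Finset (Set (Fin n → ℝ)))
    (hcomp : ∀ ℓ : ℕ, ∀ c ∈ C ℓ, IsCompact c)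
    (hnonempty : ∀ ℓ : ℕ, ∀ c ∈ C ℓ, (c : Set (Fin n → ℝ)).Nonempty)
    (Qs : ℕ → Set (Fin n → ℝ))
    (hQs : ∀ ℓ : ℕ, Qs ℓ = ⋃ c ∈ C ℓ, c)
    -- the coverings stay inside the compact set `Q` and are nested:
    (hQsub : ∀ ℓ : ℕ, Qs ℓ ⊆ Q)
    (hnested : ∀ ℓ : ℕ, Qs (ℓ + 1) ⊆ Qs ℓ)
    -- the box diameters tend to zero:
    (hdiam : ∀ ε : ℝ, 0 < ε → ∃ L : ℕ, ∀ ℓ ≥ L, ∀ c ∈ C ℓ, Metric.diam c < ε)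
    -- the selection step: every retained box contains the image of a point of a
    -- retained box under some admissible parameter:
    (hsel : ∀ ℓ : ℕ, ∀ c ∈ C ℓ, ∃ c' ∈ C ℓ, ∃ x ∈ c', ∃ l ∈ Λ, f x l ∈ c) :
    (⋂ ℓ : ℕ, Qs ℓ) ⊆ FSet f Λ (⋂ ℓ : ℕ, Qs ℓ) := by
  intro y hy
  simp only [Set.mem_iInter] at hy
  have h1 : ∀ ℓ, ∃ c, c ∈ C ℓ ∧ y ∈ c := by
    intro ℓ
    have := hy ℓ
    rw [hQs ℓ] at this
    simpa using this
  choose c hcC hyc using h1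
  have h2 : ∀ ℓ, ∃ x l, x ∈ Qs ℓ ∧ l ∈ Λ ∧ f x l ∈ c ℓ := by
    intro ℓ
    obtain ⟨c', hc', x, hx, l, hl, hfl⟩ := hsel ℓ (c ℓ) (hcC ℓ)
    exact ⟨x, l, by rw [hQs]; exact Set.mem_biUnion hc' hx, hl, hfl⟩
  choose x l hx hl hfl using h2
  have hz : ∀ ℓ, (x ℓ, l ℓ) ∈ Q ×ˢ Λ := fun ℓ => ⟨hQsub ℓ (hx ℓ), hl ℓ⟩
  obtain ⟨⟨a, b⟩, hab, φ, hφ, htend⟩ := (hQ.prod hΛ).tendsto_subseq hz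
  have hfy : Filter.Tendsto (fun ℓ => f (x ℓ) (l ℓ)) Filter.atTop (nhds y) := by
    rw [Metric.tendsto_atTop]
    intro ε hε
    obtain ⟨L, hL⟩ := hdiam ε hε
    refine ⟨L, fun ℓ hℓ => ?_⟩
    calc dist (f (x ℓ) (l ℓ)) y ≤ Metric.diam (c ℓ) :=
          Metric.dist_le_diam_of_mem ((hcomp ℓ _ (hcC ℓ)).isBounded) (hfl ℓ) (hyc ℓ)
      _ < ε := hL ℓ hℓ _ (hcC ℓ)
  have hfy' : Filter.Tendsto (fun k => f (x (φ k)) (l (φ k))) Filter.atTop (nhds y) :=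
    hfy.comp hφ.tendsto_atTop
  have hfab : Filter.Tendsto (fun k => f (x (φ k)) (l (φ k))) Filter.atTop
      (nhds (f a b)) := (hf.tendsto (a, b)).comp htend
  have hy_eq : y = f a b := tendsto_nhds_unique hfy' hfab
  have hanti : Antitone Qs := antitone_nat_of_succ_le hnested
  have hxa : Filter.Tendsto (fun k => x (φ k)) Filter.atTop (nhds a) :=
    (continuous_fst.tendsto (a, b)).comp htend
  have ha : a ∈ ⋂ ℓ, Qs ℓ := by
    rw [Set.mem_iInter]
    intro m
    have hclosed : IsClosed (Qs m) := by
      rw [hQs]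
      exact ((C m).finite_toSet.isCompact_biUnion (fun c hc => hcomp m c hc)).isClosed
    refine hclosed.mem_of_tendsto hxa ?_
    filter_upwards [Filter.eventually_ge_atTop m] with k hk
    exact hanti (hk.trans hφ.le_apply) (hx (φ k))
  exact Set.mem_biUnion ha ⟨b, hab.2, hy_eq.symm⟩
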